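/- arXiv:2504.07617 — 6 statements merged into one kernel-verified Lean document; each statement's English description precedes it below -/
import Mathlib

section
/- Let a, b, c ∈ ℂ with a ≠ 0 and Im c > 0, Im b > 0. The function φ(z) = a/(z+c) + b maps ℂ₊ into ℂ₊ if and only if |a| + Re a ≤ 2·(Im b)·(Im c). -/
theorem linear_fractional_endofunction_iff (a b c : ℂ) (ha : a ≠ 0)
    (hc : 0 < c.im) (hb : 0 < b.im) :
    (∀ z : ℂ, 0 < z.im → 0 < (a / (z + c) + b).im) ↔
      ‖a‖ + a.re ≤ 2 * b.im * c.im := by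
  set t := ‖a‖ with ht
  have htpos : 0 < t := by simpa [ht] using norm_pos_iff.mpr ha
  have ht2 : t ^ 2 = a.re ^ 2 + a.im ^ 2 := by
    rw [ht, Complex.sq_norm, Complex.normSq_apply]; ring
  have hs0 : 0 ≤ t + a.re := by
    have h1 := Complex.abs_re_le_norm a
    have h2 := neg_abs_le a.re
    simp only [← ht] at h1
    linarith
  have him : ∀ w : ℂ, (a / w + b).im
      = (a.im * w.re - a.re * w.im) / (w.re ^ 2 + w.im ^ 2) + b.im := by
    intro w
    rw [Complex.add_im, Complex.div_im, Complex.normSq_apply]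
    ring
  constructor
  · intro H
    by_contra hlt
    push_neg at hlt
    have hspos : 0 < t + a.re := lt_of_le_of_lt (by positivity) hlt
    set s := t + a.re with hs
    set y := s / (2 * b.im) with hy
    have hy0 : 0 < y := by positivity
    have hyc : c.im < y := by
      rw [hy, lt_div_iff₀ (by positivity)]
      linarith
    set x := -a.im * y / s with hx
    set z := (x : ℂ) + (y : ℂ) * Complex.I - c with hz
    have hzc : z + c = (x : ℂ) + (y : ℂ) * Complex.I := by
      rw [hz]; ring
    have hzim : 0 < z.im := by
      simp [hz]
      linarith
    have hpos := H z hzim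
    rw [hzc, him] at hpos
    simp only [Complex.add_re, Complex.add_im, Complex.ofReal_re, Complex.ofReal_im,
      Complex.mul_re, Complex.mul_im, Complex.I_re, Complex.I_im] at hpos
    norm_num at hpos
    have hnum : a.im * x - a.re * y = -(y * t) := by
      have hxs : x * s = -a.im * y := by rw [hx]; exact div_mul_cancel₀ _ hspos.ne'
      apply mul_right_cancel₀ hspos.ne'
      rw [hs] at hxs ⊢
      linear_combination a.im * hxs + y * ht2
    have hden : x ^ 2 + y ^ 2 = 2 * t * y ^ 2 / s := by
      have hxs : x * s = -a.im * y := by rw [hx]; exact div_mul_cancel₀ _ hspos.ne'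
      rw [eq_div_iff hspos.ne']
      apply mul_right_cancel₀ hspos.ne'
      rw [hs] at hxs ⊢
      linear_combination (x * (t + a.re) - a.im * y) * hxs + (-y ^ 2) * ht2
    rw [hnum, hden] at hpos
    have hval : -(y * t) / (2 * t * y ^ 2 / s) = -b.im := by
      rw [hy]
      field_simp
    rw [hval] at hpos
    linarith
  · intro hle z hz
    set w := z + c with hwdef
    have hwim : c.im < w.im := by
      have : w.im = z.im + c.im := by simp [hwdef]
      linarith [this]
    have hyy : 0 < w.im := lt_trans hc hwim
    rw [him]
    have hN : 0 < w.re ^ 2 + w.im ^ 2 := by positivity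
    have key : 0 ≤ t * (w.re ^ 2 + w.im ^ 2) + a.re * (w.re ^ 2 - w.im ^ 2)
        + 2 * a.im * w.re * w.im := by
      have hure : ((starRingEnd ℂ) a * w ^ 2).re
          = a.re * (w.re ^ 2 - w.im ^ 2) + 2 * a.im * w.re * w.im := by
        simp [Complex.mul_re, Complex.mul_im, pow_two]
        ring
      have habs : ‖(starRingEnd ℂ) a * w ^ 2‖
          = t * (w.re ^ 2 + w.im ^ 2) := by
        rw [norm_mul, norm_pow, Complex.norm_conj, Complex.sq_norm, Complex.normSq_apply, ht]
        ring
      have h3 := Complex.abs_re_le_norm ((starRingEnd ℂ) a * w ^ 2)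
      rw [habs, hure] at h3
      have h4 := neg_abs_le (a.re * (w.re ^ 2 - w.im ^ 2) + 2 * a.im * w.re * w.im)
      linarith
    have h2 : t + a.re < 2 * b.im * w.im := by
      refine lt_of_le_of_lt hle ?_
      nlinarith
    rw [div_add' _ _ _ hN.ne']
    apply div_pos _ hN
    nlinarith [key, mul_pos hN (sub_pos.mpr h2), hyy]
end

section
/- For Im c > 0 and a ∈ ℂ, the image of ℂ₊ under the map z ↦ a/(z+c) is the open disk of radius |a|/(2·Im c) centered at -i·a/(2·Im c), minus possibly its center if one excludes the point at infinity; in particular {a/(z+c) : z ∈ ℂ₊} is contained in the closed disk of radius |a|/(2 Im c) centered at -ia/(2 Im c). -/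
lemma key_ineq (a : ℂ) (m : ℝ) (hm : 0 < m) (w : ℂ) (hw : w ≠ 0) :
    ‖w - (-Complex.I * a / (2 * m))‖ < ‖a‖ / (2 * m) ↔ m < (a / w).im := by
  have hns : 0 < Complex.normSq w := Complex.normSq_pos.2 hw
  have h2m : (0:ℝ) < 2 * m := by linarith
  rw [show ‖w - (-Complex.I * a / (2 * m))‖ < ‖a‖ / (2 * m) ↔
      Complex.normSq (w - (-Complex.I * a / (2 * m))) < (‖a‖ / (2 * m))^2 from by
    rw [← Complex.sq_norm]
    exact ⟨fun h => pow_lt_pow_left₀ h (norm_nonneg _) (by norm_num),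
      fun h => lt_of_pow_lt_pow_left₀ 2 (div_nonneg (norm_nonneg a) h2m.le) h⟩]
  rw [show ((2 : ℂ) * (m:ℂ)) = ((2*m:ℝ):ℂ) by push_cast; ring]
  rw [Complex.div_im, div_pow, Complex.sq_norm]
  simp only [Complex.normSq_apply, Complex.sub_re, Complex.sub_im, Complex.div_ofReal_re,
    Complex.div_ofReal_im, Complex.mul_re, Complex.mul_im, Complex.neg_re, Complex.neg_im,
    Complex.I_re, Complex.I_im]
  rw [Complex.normSq_apply] at hns
  rw [show a.im * w.re / (w.re * w.re + w.im * w.im) - a.re * w.im / (w.re * w.re + w.im * w.im)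
      = (a.im * w.re - a.re * w.im) / (w.re * w.re + w.im * w.im) by ring,
    lt_div_iff₀ hns]
  field_simp
  constructor <;> intro h
  · nlinarith [hns, hm, mul_pos hm hm, mul_pos (mul_pos hm hm) hm]
  · nlinarith [mul_lt_mul_of_pos_left h hm, hns, hm, mul_pos hm hm, mul_pos (mul_pos hm hm) hm]

lemma image_eq_ball (a c : ℂ) (ha : a ≠ 0) (hc : 0 < c.im) :
    (fun z : ℂ => a / (z + c)) '' {z : ℂ | 0 < z.im} =
      Metric.ball (-Complex.I * a / (2 * c.im)) (‖a‖ / (2 * c.im)) := by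
  ext w
  simp only [Set.mem_image, Set.mem_setOf_eq, Metric.mem_ball, Complex.dist_eq]
  constructor
  · rintro ⟨z, hz, rfl⟩
    have hzc : z + c ≠ 0 := by
      intro h
      have : (z + c).im = 0 := by rw [h]; simp
      rw [Complex.add_im] at this; linarith
    have hw : a / (z + c) ≠ 0 := div_ne_zero ha hzc
    rw [key_ineq a c.im hc _ hw, show a / (a / (z + c)) = z + c by
      rw [div_div_eq_mul_div, mul_comm, mul_div_assoc, div_self ha, mul_one]]
    rw [Complex.add_im]; linarith
  · intro hw
    have hw0 : w ≠ 0 := by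
      intro h
      subst h
      rw [zero_sub, norm_neg, norm_div, norm_mul, norm_neg, Complex.norm_I, one_mul,
        show ((2:ℂ) * (c.im:ℂ)) = ((2 * c.im : ℝ):ℂ) by push_cast; ring,
        Complex.norm_real, Real.norm_eq_abs, abs_of_pos (by linarith)] at hw
      exact lt_irrefl _ hw
    rw [key_ineq a c.im hc w hw0] at hw
    refine ⟨a / w - c, ?_, ?_⟩
    · simp only [Set.mem_setOf_eq, Complex.sub_im]; linarith
    · rw [sub_add_cancel, div_div_eq_mul_div, mul_comm, mul_div_assoc, div_self ha, mul_one]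

theorem image_of_inversion_is_disk (a c : ℂ) (ha : a ≠ 0) (hc : 0 < c.im) :
    ((fun z : ℂ => a / (z + c)) '' {z : ℂ | 0 < z.im} =
        Metric.ball (-Complex.I * a / (2 * c.im)) (‖a‖ / (2 * c.im)) ∨
      (fun z : ℂ => a / (z + c)) '' {z : ℂ | 0 < z.im} =
        Metric.ball (-Complex.I * a / (2 * c.im)) (‖a‖ / (2 * c.im)) \
          {-Complex.I * a / (2 * c.im)}) ∧
    (fun z : ℂ => a / (z + c)) '' {z : ℂ | 0 < z.im} ⊆
      Metric.closedBall (-Complex.I * a / (2 * c.im)) (‖a‖ / (2 * c.im)) := by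
  have h := image_eq_ball a c ha hc
  exact ⟨Or.inl h, h ▸ Metric.ball_subset_closedBall⟩
end

section
/- Let λ be a finite signed Borel measure on ℝ, α, β ∈ ℝ, c ∈ ℝ, and φ(z) = α + β z + ∫_ℝ (1+sz)/(s−z) dλ(s) for z ∈ ℂ₊. Then lim_{y → 0⁺} y · φ(c + i y) = i (1 + c²) λ({c}). -/
open MeasureTheory Filter

lemma sub_z_ne (c y s : ℝ) (hy : 0 < y) : ((s:ℂ) - ((c:ℂ) + (y:ℂ)*Complex.I)) ≠ 0 := by
  intro h
  have h2 : ((s:ℂ) - ((c:ℂ) + (y:ℂ)*Complex.I)).im = 0 := by rw [h]; simp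
  simp [Complex.sub_im, Complex.add_im] at h2
  linarith

lemma sub_z_norm (c y s : ℝ) (hy : 0 < y) :
    y ≤ ‖(s:ℂ) - ((c:ℂ) + (y:ℂ)*Complex.I)‖ := by
  have h := Complex.abs_im_le_norm ((s:ℂ) - ((c:ℂ) + (y:ℂ)*Complex.I))
  have him : ((s:ℂ) - ((c:ℂ) + (y:ℂ)*Complex.I)).im = -y := by
    simp [Complex.sub_im, Complex.add_im]
  rw [him, abs_neg, abs_of_pos hy] at h
  exact h

lemma key_tendsto (c : ℝ) (μ : Measure ℝ) [IsFiniteMeasure μ] :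
    Tendsto (fun y : ℝ => (y : ℂ) * ∫ s : ℝ, ((s:ℂ) - ((c:ℂ) + (y:ℂ)*Complex.I))⁻¹ ∂μ)
      (nhdsWithin 0 (Set.Ioi 0)) (nhds (Complex.I * ((μ {c}).toReal : ℝ))) := by
  have hmain : Tendsto (fun y : ℝ => ∫ s : ℝ, (y:ℂ) * ((s:ℂ) - ((c:ℂ)+(y:ℂ)*Complex.I))⁻¹ ∂μ)
      (nhdsWithin 0 (Set.Ioi 0))
      (nhds (∫ s : ℝ, Set.indicator {c} (fun _ => Complex.I) s ∂μ)) := by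
    apply tendsto_integral_filter_of_dominated_convergence (fun _ => (1:ℝ))
    · filter_upwards [self_mem_nhdsWithin] with y hy
      exact (continuous_const.mul ((Complex.continuous_ofReal.sub continuous_const).inv₀
        (fun s => sub_z_ne c y s hy))).aestronglyMeasurable
    · filter_upwards [self_mem_nhdsWithin] with y hy
      refine Filter.Eventually.of_forall (fun s => ?_)
      have hpos : (0:ℝ) < ‖(s:ℂ) - ((c:ℂ) + (y:ℂ)*Complex.I)‖ :=
        lt_of_lt_of_le hy (sub_z_norm c y s hy)
      rw [norm_mul, norm_inv]
      simp only [Complex.norm_real, Real.norm_eq_abs]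
      rw [abs_of_pos hy, ← div_eq_mul_inv, div_le_one hpos]
      exact sub_z_norm c y s hy
    · exact integrable_const 1
    · refine Filter.Eventually.of_forall (fun s => ?_)
      by_cases hs : s = c
      · subst hs
        have heq : ∀ᶠ y : ℝ in nhdsWithin 0 (Set.Ioi 0),
            Complex.I = (y:ℂ) * ((s:ℂ) - ((s:ℂ)+(y:ℂ)*Complex.I))⁻¹ := by
          filter_upwards [self_mem_nhdsWithin] with y hy
          have hy' : (y:ℂ) ≠ 0 := Complex.ofReal_ne_zero.mpr (ne_of_gt hy)
          rw [show ((s:ℂ) - ((s:ℂ)+(y:ℂ)*Complex.I)) = -((y:ℂ)*Complex.I) by ring]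
          rw [inv_neg, mul_inv, Complex.inv_I]
          field_simp
        have : Set.indicator {s} (fun _ => Complex.I) s = Complex.I := by
          simp
        rw [this]
        exact tendsto_const_nhds.congr' heq
      · have h1 : Tendsto (fun y : ℝ => (y:ℂ)) (nhdsWithin 0 (Set.Ioi 0)) (nhds 0) := by
          have := (Complex.continuous_ofReal.tendsto (0:ℝ)).mono_left
            (nhdsWithin_le_nhds (s := Set.Ioi (0:ℝ)))
          simpa using this
        have hne : (s:ℂ) - (c:ℂ) ≠ 0 := by
          rw [sub_ne_zero]
          exact_mod_cast hs
        have h2 : Tendsto (fun y : ℝ => ((s:ℂ) - ((c:ℂ)+(y:ℂ)*Complex.I))⁻¹)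
            (nhdsWithin 0 (Set.Ioi 0)) (nhds ((s:ℂ) - (c:ℂ))⁻¹) := by
          have : Tendsto (fun y : ℝ => (s:ℂ) - ((c:ℂ)+(y:ℂ)*Complex.I))
              (nhdsWithin 0 (Set.Ioi 0)) (nhds ((s:ℂ) - (c:ℂ))) := by
            have := (tendsto_const_nhds (x := (s:ℂ)) (f := nhdsWithin (0:ℝ) (Set.Ioi 0))).sub
              ((tendsto_const_nhds (x := (c:ℂ))).add (h1.mul_const Complex.I))
            simpa using this
          exact this.inv₀ hne
        have := h1.mul h2
        rw [zero_mul] at this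
        have hind : Set.indicator {c} (fun _ => Complex.I) s = 0 :=
          Set.indicator_of_notMem (s := ({c} : Set ℝ)) (by simp [hs]) _
        rw [hind]
        exact this
  have hrw : (fun y : ℝ => (y : ℂ) * ∫ s : ℝ, ((s:ℂ) - ((c:ℂ) + (y:ℂ)*Complex.I))⁻¹ ∂μ)
      = (fun y : ℝ => ∫ s : ℝ, (y:ℂ) * ((s:ℂ) - ((c:ℂ)+(y:ℂ)*Complex.I))⁻¹ ∂μ) := by
    funext y
    rw [integral_const_mul _ _]
  rw [hrw]
  have hval : (∫ s : ℝ, Set.indicator {c} (fun _ => Complex.I) s ∂μ)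
      = Complex.I * ((μ {c}).toReal : ℝ) := by
    rw [integral_indicator_const _ (measurableSet_singleton c)]
    simp [smul_eq_mul, mul_comm, Measure.real]
  rw [← hval]
  exact hmain

lemma integral_rewrite (z : ℂ) (hz : 0 < z.im) (μ : Measure ℝ) [IsFiniteMeasure μ] :
    (∫ s : ℝ, (1 + (s:ℂ)*z)/((s:ℂ)-z) ∂μ)
      = (1 + z^2) * (∫ s : ℝ, ((s:ℂ)-z)⁻¹ ∂μ) + z * ((μ Set.univ).toReal : ℝ) := by
  have hne : ∀ s : ℝ, (s:ℂ) - z ≠ 0 := by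
    intro s h
    have h2 : ((s:ℂ) - z).im = 0 := by rw [h]; simp
    simp [Complex.sub_im] at h2
    linarith
  have hnorm : ∀ s : ℝ, ‖((s:ℂ)-z)⁻¹‖ ≤ (z.im)⁻¹ := by
    intro s
    rw [norm_inv]
    apply inv_anti₀ hz
    have h := Complex.abs_im_le_norm ((s:ℂ) - z)
    have him : ((s:ℂ) - z).im = -z.im := by simp [Complex.sub_im]
    rw [him, abs_neg, abs_of_pos hz] at h
    simpa using h
  have hint : Integrable (fun s : ℝ => ((s:ℂ)-z)⁻¹) μ := by
    apply (integrable_const ((z.im)⁻¹)).mono'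
    · exact ((Complex.continuous_ofReal.sub continuous_const).inv₀ hne).aestronglyMeasurable
    · exact Filter.Eventually.of_forall (fun s => by simpa using hnorm s)
  have hcongr : (∫ s : ℝ, (1 + (s:ℂ)*z)/((s:ℂ)-z) ∂μ)
      = ∫ s : ℝ, ((1+z^2) * ((s:ℂ)-z)⁻¹ + z) ∂μ := by
    apply integral_congr_ae
    refine Filter.Eventually.of_forall (fun s => ?_)
    field_simp [hne s]
    ring
  rw [hcongr, integral_add (hint.const_mul _) (integrable_const z), integral_const_mul _ _,
    integral_const]
  simp [smul_eq_mul, mul_comm, Measure.real]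

theorem mass_at_point (α β c : ℝ) (lam1 lam2 : Measure ℝ)
    [IsFiniteMeasure lam1] [IsFiniteMeasure lam2] (φ : ℂ → ℂ)
    (hφ : ∀ z : ℂ, 0 < z.im →
      φ z = (α : ℂ) + (β : ℂ) * z +
        ((∫ s : ℝ, (1 + (s : ℂ) * z) / ((s : ℂ) - z) ∂lam1) -
          ∫ s : ℝ, (1 + (s : ℂ) * z) / ((s : ℂ) - z) ∂lam2)) :
    Tendsto (fun y : ℝ => (y : ℂ) * φ ((c : ℂ) + (y : ℂ) * Complex.I))
      (nhdsWithin 0 (Set.Ioi 0))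
      (nhds (Complex.I * (1 + (c : ℂ) ^ 2) *
        (((lam1 {c}).toReal - (lam2 {c}).toReal : ℝ) : ℂ))) := by
  set l := nhdsWithin (0:ℝ) (Set.Ioi 0) with hl
  have him : ∀ y : ℝ, 0 < y → 0 < ((c:ℂ) + (y:ℂ)*Complex.I).im := by
    intro y hy
    simpa [Complex.add_im] using hy
  have heq : ∀ᶠ y : ℝ in l, (y:ℂ) * φ ((c:ℂ)+(y:ℂ)*Complex.I)
      = (y:ℂ)*(α:ℂ) + (y:ℂ)*(β:ℂ)*((c:ℂ)+(y:ℂ)*Complex.I)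
        + ((1+((c:ℂ)+(y:ℂ)*Complex.I)^2) *
              ((y:ℂ) * ∫ s : ℝ, ((s:ℂ)-((c:ℂ)+(y:ℂ)*Complex.I))⁻¹ ∂lam1)
           + (y:ℂ)*((c:ℂ)+(y:ℂ)*Complex.I)*((lam1 Set.univ).toReal:ℝ))
        - ((1+((c:ℂ)+(y:ℂ)*Complex.I)^2) *
              ((y:ℂ) * ∫ s : ℝ, ((s:ℂ)-((c:ℂ)+(y:ℂ)*Complex.I))⁻¹ ∂lam2)
           + (y:ℂ)*((c:ℂ)+(y:ℂ)*Complex.I)*((lam2 Set.univ).toReal:ℝ)) := by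
    filter_upwards [self_mem_nhdsWithin] with y hy
    rw [hφ _ (him y hy), integral_rewrite _ (him y hy) lam1,
      integral_rewrite _ (him y hy) lam2]
    ring
  have h1 : Tendsto (fun y : ℝ => (y:ℂ)) l (nhds 0) := by
    have := (Complex.continuous_ofReal.tendsto (0:ℝ)).mono_left
      (nhdsWithin_le_nhds (s := Set.Ioi (0:ℝ)))
    simpa using this
  have hz : Tendsto (fun y : ℝ => (c:ℂ)+(y:ℂ)*Complex.I) l (nhds (c:ℂ)) := by
    have := (tendsto_const_nhds (x := (c:ℂ)) (f := l)).add (h1.mul_const Complex.I)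
    simpa using this
  have hk1 := key_tendsto c lam1
  have hk2 := key_tendsto c lam2
  have hbig := ((((h1.mul_const ((α:ℂ))).add ((h1.mul_const ((β:ℂ))).mul hz)).add
      ((((tendsto_const_nhds (x := (1:ℂ))).add (hz.mul hz)).mul hk1).add
        (((h1.mul hz)).mul_const ((lam1 Set.univ).toReal:ℂ)))).sub
      ((((tendsto_const_nhds (x := (1:ℂ))).add (hz.mul hz)).mul hk2).add
        (((h1.mul hz)).mul_const ((lam2 Set.univ).toReal:ℂ))))
  have hbig' : Tendsto (fun y : ℝ =>
      (y:ℂ)*(α:ℂ) + (y:ℂ)*(β:ℂ)*((c:ℂ)+(y:ℂ)*Complex.I)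
        + ((1+((c:ℂ)+(y:ℂ)*Complex.I)^2) *
              ((y:ℂ) * ∫ s : ℝ, ((s:ℂ)-((c:ℂ)+(y:ℂ)*Complex.I))⁻¹ ∂lam1)
           + (y:ℂ)*((c:ℂ)+(y:ℂ)*Complex.I)*((lam1 Set.univ).toReal:ℝ))
        - ((1+((c:ℂ)+(y:ℂ)*Complex.I)^2) *
              ((y:ℂ) * ∫ s : ℝ, ((s:ℂ)-((c:ℂ)+(y:ℂ)*Complex.I))⁻¹ ∂lam2)
           + (y:ℂ)*((c:ℂ)+(y:ℂ)*Complex.I)*((lam2 Set.univ).toReal:ℝ))) l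
      (nhds (Complex.I * (1 + (c : ℂ) ^ 2) *
        (((lam1 {c}).toReal - (lam2 {c}).toReal : ℝ) : ℂ))) := by
    have hval : (0:ℂ)*(α:ℂ) + 0*(β:ℂ)*(c:ℂ)
        + ((1+(c:ℂ)*(c:ℂ)) * (Complex.I * ((lam1 {c}).toReal : ℝ))
            + 0*(c:ℂ)*((lam1 Set.univ).toReal:ℂ))
        - ((1+(c:ℂ)*(c:ℂ)) * (Complex.I * ((lam2 {c}).toReal : ℝ))
            + 0*(c:ℂ)*((lam2 Set.univ).toReal:ℂ))
        = Complex.I * (1 + (c : ℂ) ^ 2) *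
          (((lam1 {c}).toReal - (lam2 {c}).toReal : ℝ) : ℂ) := by
      push_cast
      ring
    rw [← hval]
    convert hbig using 2
    ring
  exact hbig'.congr' (heq.mono fun y h => h.symm)
end

section
/- Let λ be a finite signed Borel measure on ℝ, φ(z) = α + β z + ∫_ℝ (1+sz)/(s−z) dλ(s) with α, β ∈ ℝ, and let V_φ be the Stoltz sector {x + i y : |x| < y tan θ} for some 0 < θ < π/2 and b > 0. Then the set {(φ(x+iy) − β(x+iy))/y : x+iy ∈ V_θ, y ≥ b} is bounded, and (φ(x+iy) − β(x+iy))/y → 0 as x+iy → ∞ within V_θ. -/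
open MeasureTheory Filter Bornology

private lemma sector_im_pos {θ : ℝ} (hθ1 : 0 < θ) (hθ2 : θ < Real.pi / 2)
    {z : ℂ} (hz : |z.re| < z.im * Real.tan θ) : 0 < z.im := by
  have ht : 0 < Real.tan θ := Real.tan_pos_of_pos_of_lt_pi_div_two hθ1 hθ2
  nlinarith [abs_nonneg z.re]

private lemma sector_norm_le {θ : ℝ} (hθ1 : 0 < θ) (hθ2 : θ < Real.pi / 2)
    {z : ℂ} (hz : |z.re| < z.im * Real.tan θ) :
    ‖z‖ ≤ z.im * (Real.tan θ + 1) := by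
  have h1 : ‖z‖ ≤ |z.re| + |z.im| := Complex.norm_le_abs_re_add_abs_im z
  have hy := sector_im_pos hθ1 hθ2 hz
  have h2 : |z.im| = z.im := abs_of_pos hy
  nlinarith

private lemma denom_ge {z : ℂ} (s : ℝ) : z.im ≤ ‖(s : ℂ) - z‖ := by
  have := Complex.abs_im_le_norm ((s : ℂ) - z)
  simp only [Complex.sub_im, Complex.ofReal_im, zero_sub, abs_neg] at this
  exact (le_abs_self z.im).trans this

/-- Bound valid uniformly in `s`. -/
private lemma kernel_bound {θ : ℝ} (hθ1 : 0 < θ) (hθ2 : θ < Real.pi / 2)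
    {z : ℂ} (hz : |z.re| < z.im * Real.tan θ) (s : ℝ) :
    ‖(1 + (s : ℂ) * z) / (((s : ℂ) - z) * (z.im : ℂ))‖ ≤
      1 / z.im ^ 2 + (1 + (Real.tan θ + 1)) * (Real.tan θ + 1) := by
  set K := Real.tan θ + 1 with hK
  have ht : 0 < Real.tan θ := Real.tan_pos_of_pos_of_lt_pi_div_two hθ1 hθ2
  have hKpos : (0:ℝ) < K := by positivity
  have hy : 0 < z.im := sector_im_pos hθ1 hθ2 hz
  have hnz : ‖z‖ ≤ z.im * K := sector_norm_le hθ1 hθ2 hz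
  set d := ‖(s : ℂ) - z‖ with hd
  have hdy : z.im ≤ d := denom_ge s
  have hdpos : 0 < d := lt_of_lt_of_le hy hdy
  -- |s| ≤ d * (1 + K)
  have hs : |s| ≤ d * (1 + K) := by
    have h1 : |s - z.re| ≤ d := by
      have := Complex.abs_re_le_norm ((s : ℂ) - z)
      simpa [Complex.sub_re] using this
    have h2 : |z.re| ≤ z.im * K := by
      calc |z.re| ≤ ‖z‖ := by
            simpa using Complex.abs_re_le_norm z
        _ ≤ z.im * K := hnz
    have h3 : |s| ≤ |s - z.re| + |z.re| := by
      have := abs_add_le (s - z.re) z.re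
      simpa using this
    nlinarith
  have hnum : ‖1 + (s : ℂ) * z‖ ≤ 1 + (d * (1 + K)) * (z.im * K) := by
    calc ‖1 + (s : ℂ) * z‖ ≤ ‖(1 : ℂ)‖ + ‖(s : ℂ) * z‖ := norm_add_le _ _
      _ = 1 + |s| * ‖z‖ := by simp
      _ ≤ 1 + (d * (1 + K)) * (z.im * K) := by
          have := mul_le_mul hs hnz (norm_nonneg z) (by positivity)
          nlinarith
  have hnorm : ‖(1 + (s : ℂ) * z) / (((s : ℂ) - z) * (z.im : ℂ))‖
      = ‖1 + (s : ℂ) * z‖ / (d * z.im) := by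
    rw [norm_div, norm_mul]
    simp [hd, Complex.norm_real, abs_of_pos hy]
  rw [hnorm]
  have key : ‖1 + (s : ℂ) * z‖ / (d * z.im) ≤ (1 + (d * (1 + K)) * (z.im * K)) / (d * z.im) := by
    gcongr
  refine key.trans ?_
  rw [add_div]
  have e : d * (1 + K) * (z.im * K) / (d * z.im) = (1 + K) * K := by
    field_simp
  rw [e]
  have h1 : 1 / (d * z.im) ≤ 1 / z.im ^ 2 := by
    apply one_div_le_one_div_of_le (by positivity)
    nlinarith
  linarith

/-- Bound valid for a fixed `s`, tending to `0` as `z.im → ∞`. -/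
private lemma kernel_bound' {θ : ℝ} (hθ1 : 0 < θ) (hθ2 : θ < Real.pi / 2)
    {z : ℂ} (hz : |z.re| < z.im * Real.tan θ) (hz1 : 1 ≤ z.im) (s : ℝ) :
    ‖(1 + (s : ℂ) * z) / (((s : ℂ) - z) * (z.im : ℂ))‖ ≤
      (1 + |s| * (Real.tan θ + 1)) / z.im := by
  set K := Real.tan θ + 1 with hK
  have ht : 0 < Real.tan θ := Real.tan_pos_of_pos_of_lt_pi_div_two hθ1 hθ2
  have hKpos : (0:ℝ) < K := by positivity
  have hy : 0 < z.im := sector_im_pos hθ1 hθ2 hz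
  have hnz : ‖z‖ ≤ z.im * K := sector_norm_le hθ1 hθ2 hz
  set d := ‖(s : ℂ) - z‖ with hd
  have hdy : z.im ≤ d := denom_ge s
  have hdpos : 0 < d := lt_of_lt_of_le hy hdy
  have hnum : ‖1 + (s : ℂ) * z‖ ≤ 1 + |s| * (z.im * K) := by
    calc ‖1 + (s : ℂ) * z‖ ≤ ‖(1 : ℂ)‖ + ‖(s : ℂ) * z‖ := norm_add_le _ _
      _ = 1 + |s| * ‖z‖ := by simp
      _ ≤ 1 + |s| * (z.im * K) := by
          have := mul_le_mul_of_nonneg_left hnz (abs_nonneg s)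
          linarith
  have hnorm : ‖(1 + (s : ℂ) * z) / (((s : ℂ) - z) * (z.im : ℂ))‖
      = ‖1 + (s : ℂ) * z‖ / (d * z.im) := by
    rw [norm_div, norm_mul]
    simp [hd, Complex.norm_real, abs_of_pos hy]
  rw [hnorm]
  have key : ‖1 + (s : ℂ) * z‖ / (d * z.im) ≤ (1 + |s| * (z.im * K)) / (z.im * z.im) := by
    gcongr
  refine key.trans ?_
  rw [div_le_div_iff₀ (by positivity) hy]
  have habs : 0 ≤ |s| := abs_nonneg s
  nlinarith

private lemma im_tendsto_atTop {θ : ℝ} (hθ1 : 0 < θ) (hθ2 : θ < Real.pi / 2) :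
    Tendsto (fun z : ℂ => z.im)
      (cobounded ℂ ⊓ Filter.principal {z : ℂ | |z.re| < z.im * Real.tan θ}) atTop := by
  have ht : 0 < Real.tan θ := Real.tan_pos_of_pos_of_lt_pi_div_two hθ1 hθ2
  set K := Real.tan θ + 1 with hK
  have hKpos : (0:ℝ) < K := by positivity
  rw [tendsto_atTop]
  intro M
  rw [eventually_inf_principal]
  have hcb : ∀ᶠ z : ℂ in cobounded ℂ, |M| * K ≤ ‖z‖ :=
    tendsto_norm_cobounded_atTop.eventually_ge_atTop (|M| * K)
  refine hcb.mono fun z hz hzS => ?_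
  have hzS' : |z.re| < z.im * Real.tan θ := hzS
  have hy : 0 < z.im := sector_im_pos hθ1 hθ2 hzS'
  have hnz : ‖z‖ ≤ z.im * K := sector_norm_le hθ1 hθ2 hzS'
  have : |M| * K ≤ z.im * K := le_trans hz hnz
  have h2 : |M| ≤ z.im := le_of_mul_le_mul_right this hKpos
  exact (le_abs_self M).trans h2

private lemma integral_tendsto_zero {θ : ℝ} (hθ1 : 0 < θ) (hθ2 : θ < Real.pi / 2)
    (μ : Measure ℝ) [IsFiniteMeasure μ] :
    Tendsto (fun z : ℂ => ∫ s : ℝ, (1 + (s : ℂ) * z) / (((s : ℂ) - z) * (z.im : ℂ)) ∂μ)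
      (cobounded ℂ ⊓ Filter.principal {z : ℂ | |z.re| < z.im * Real.tan θ}) (nhds 0) := by
  set L := cobounded ℂ ⊓ Filter.principal {z : ℂ | |z.re| < z.im * Real.tan θ} with hL
  haveI : (cobounded ℂ).IsCountablyGenerated := by
    rw [← comap_norm_atTop]
    infer_instance
  haveI : L.IsCountablyGenerated := Filter.Inf.isCountablyGenerated _ _
  set K := Real.tan θ + 1 with hK
  have ht : 0 < Real.tan θ := Real.tan_pos_of_pos_of_lt_pi_div_two hθ1 hθ2
  have hKpos : (0:ℝ) < K := by positivity
  have him := im_tendsto_atTop hθ1 hθ2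
  have hev1 : ∀ᶠ z : ℂ in L, 1 ≤ z.im := him.eventually_ge_atTop 1
  have hevS : ∀ᶠ z : ℂ in L, |z.re| < z.im * Real.tan θ :=
    eventually_inf_principal.2 (Eventually.of_forall fun z hz => hz)
  have hzero : (0 : ℂ) = ∫ _ : ℝ, (0 : ℂ) ∂μ := by simp
  rw [hzero]
  apply tendsto_integral_filter_of_dominated_convergence (fun _ => 1 + (1 + K) * K)
  · refine Eventually.of_forall fun z => ?_
    apply Measurable.aestronglyMeasurable
    fun_prop
  · filter_upwards [hev1, hevS] with z hz1 hzS
    refine Eventually.of_forall fun s => ?_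
    have := kernel_bound hθ1 hθ2 hzS s
    have hy : 0 < z.im := sector_im_pos hθ1 hθ2 hzS
    have h2 : 1 / z.im ^ 2 ≤ 1 := by
      rw [div_le_one (by positivity)]
      nlinarith
    linarith
  · exact integrable_const _
  · refine Eventually.of_forall fun s => ?_
    have hbnd : Tendsto (fun z : ℂ => (1 + |s| * K) / z.im) L (nhds 0) :=
      tendsto_const_nhds.div_atTop him
    refine squeeze_zero_norm' ?_ hbnd
    filter_upwards [hev1, hevS] with z hz1 hzS
    exact kernel_bound' hθ1 hθ2 hzS hz1 s

theorem stoltz_sector_growth (α β : ℝ) (lam1 lam2 : Measure ℝ)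
    [IsFiniteMeasure lam1] [IsFiniteMeasure lam2] (φ : ℂ → ℂ)
    (hφ : ∀ z : ℂ, 0 < z.im →
      φ z = (α : ℂ) + (β : ℂ) * z +
        ((∫ s : ℝ, (1 + (s : ℂ) * z) / ((s : ℂ) - z) ∂lam1) -
          ∫ s : ℝ, (1 + (s : ℂ) * z) / ((s : ℂ) - z) ∂lam2))
    (θ : ℝ) (hθ : 0 < θ ∧ θ < Real.pi / 2) (b : ℝ) (hb : 0 < b) :
    IsBounded ((fun z : ℂ => (φ z - (β : ℂ) * z) / (z.im : ℂ)) ''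
        {z : ℂ | |z.re| < z.im * Real.tan θ ∧ b ≤ z.im}) ∧
      Tendsto (fun z : ℂ => (φ z - (β : ℂ) * z) / (z.im : ℂ))
        (cobounded ℂ ⊓ Filter.principal {z : ℂ | |z.re| < z.im * Real.tan θ})
        (nhds 0) := by
  obtain ⟨hθ1, hθ2⟩ := hθ
  have ht : 0 < Real.tan θ := Real.tan_pos_of_pos_of_lt_pi_div_two hθ1 hθ2
  set K := Real.tan θ + 1 with hK
  have hKpos : (0:ℝ) < K := by positivity
  -- representation of the function on the sector
  have hrep : ∀ z : ℂ, |z.re| < z.im * Real.tan θ →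
      (φ z - (β : ℂ) * z) / (z.im : ℂ) =
        (α : ℂ) / (z.im : ℂ) +
        ((∫ s : ℝ, (1 + (s : ℂ) * z) / (((s : ℂ) - z) * (z.im : ℂ)) ∂lam1) -
          ∫ s : ℝ, (1 + (s : ℂ) * z) / (((s : ℂ) - z) * (z.im : ℂ)) ∂lam2) := by
    intro z hz
    have hy : 0 < z.im := sector_im_pos hθ1 hθ2 hz
    rw [hφ z hy]
    have e1 : (∫ s : ℝ, (1 + (s : ℂ) * z) / (((s : ℂ) - z) * (z.im : ℂ)) ∂lam1)
        = (∫ s : ℝ, (1 + (s : ℂ) * z) / ((s : ℂ) - z) ∂lam1) / (z.im : ℂ) := by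
      rw [← integral_div]
      congr 1
      funext s
      rw [div_div]
    have e2 : (∫ s : ℝ, (1 + (s : ℂ) * z) / (((s : ℂ) - z) * (z.im : ℂ)) ∂lam2)
        = (∫ s : ℝ, (1 + (s : ℂ) * z) / ((s : ℂ) - z) ∂lam2) / (z.im : ℂ) := by
      rw [← integral_div]
      congr 1
      funext s
      rw [div_div]
    rw [e1, e2]
    ring
  constructor
  · -- boundedness
    rw [isBounded_iff_forall_norm_le]
    refine ⟨|α| / b + (1 / b ^ 2 + (1 + K) * K) *
        ((lam1 Set.univ).toReal + (lam2 Set.univ).toReal), ?_⟩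
    rintro w ⟨z, ⟨hzS, hzb⟩, rfl⟩
    have hy : 0 < z.im := sector_im_pos hθ1 hθ2 hzS
    have hCb : (0:ℝ) ≤ 1 / b ^ 2 + (1 + K) * K := by positivity
    have hbd : ∀ s : ℝ, ‖(1 + (s : ℂ) * z) / (((s : ℂ) - z) * (z.im : ℂ))‖ ≤
        1 / b ^ 2 + (1 + K) * K := by
      intro s
      refine (kernel_bound hθ1 hθ2 hzS s).trans ?_
      have : 1 / z.im ^ 2 ≤ 1 / b ^ 2 := by
        apply one_div_le_one_div_of_le (by positivity)
        nlinarith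
      linarith
    have h1 : ‖∫ s : ℝ, (1 + (s : ℂ) * z) / (((s : ℂ) - z) * (z.im : ℂ)) ∂lam1‖ ≤
        (1 / b ^ 2 + (1 + K) * K) * (lam1 Set.univ).toReal :=
      norm_integral_le_of_norm_le_const (Eventually.of_forall hbd)
    have h2 : ‖∫ s : ℝ, (1 + (s : ℂ) * z) / (((s : ℂ) - z) * (z.im : ℂ)) ∂lam2‖ ≤
        (1 / b ^ 2 + (1 + K) * K) * (lam2 Set.univ).toReal :=
      norm_integral_le_of_norm_le_const (Eventually.of_forall hbd)
    have h0 : ‖(α : ℂ) / (z.im : ℂ)‖ ≤ |α| / b := by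
      rw [norm_div, Complex.norm_real, Complex.norm_real]
      rw [Real.norm_eq_abs, Real.norm_eq_abs, abs_of_pos hy]
      apply div_le_div_of_nonneg_left (abs_nonneg α) hb hzb
      -- may need adjustment
    calc ‖(φ z - (β : ℂ) * z) / (z.im : ℂ)‖
        = ‖(α : ℂ) / (z.im : ℂ) +
          ((∫ s : ℝ, (1 + (s : ℂ) * z) / (((s : ℂ) - z) * (z.im : ℂ)) ∂lam1) -
            ∫ s : ℝ, (1 + (s : ℂ) * z) / (((s : ℂ) - z) * (z.im : ℂ)) ∂lam2)‖ := by
          rw [hrep z hzS]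
      _ ≤ ‖(α : ℂ) / (z.im : ℂ)‖ +
          (‖∫ s : ℝ, (1 + (s : ℂ) * z) / (((s : ℂ) - z) * (z.im : ℂ)) ∂lam1‖ +
            ‖∫ s : ℝ, (1 + (s : ℂ) * z) / (((s : ℂ) - z) * (z.im : ℂ)) ∂lam2‖) :=
          (norm_add_le _ _).trans (by gcongr; exact norm_sub_le _ _)
      _ ≤ |α| / b + ((1 / b ^ 2 + (1 + K) * K) * (lam1 Set.univ).toReal +
            (1 / b ^ 2 + (1 + K) * K) * (lam2 Set.univ).toReal) := by
          gcongr
      _ = |α| / b + (1 / b ^ 2 + (1 + K) * K) *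
            ((lam1 Set.univ).toReal + (lam2 Set.univ).toReal) := by ring
  · -- tendsto
    set L := cobounded ℂ ⊓ Filter.principal {z : ℂ | |z.re| < z.im * Real.tan θ} with hL
    have him := im_tendsto_atTop hθ1 hθ2
    have heq : (fun z : ℂ => (α : ℂ) / (z.im : ℂ) +
        ((∫ s : ℝ, (1 + (s : ℂ) * z) / (((s : ℂ) - z) * (z.im : ℂ)) ∂lam1) -
          ∫ s : ℝ, (1 + (s : ℂ) * z) / (((s : ℂ) - z) * (z.im : ℂ)) ∂lam2)) =ᶠ[L]
        (fun z : ℂ => (φ z - (β : ℂ) * z) / (z.im : ℂ)) := by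
      rw [EventuallyEq, eventually_inf_principal]
      exact Eventually.of_forall fun z hz => (hrep z hz).symm
    refine Tendsto.congr' heq ?_
    have t1 : Tendsto (fun z : ℂ => (α : ℂ) / (z.im : ℂ)) L (nhds 0) := by
      have hr : Tendsto (fun z : ℂ => α / z.im) L (nhds 0) :=
        tendsto_const_nhds.div_atTop him
      have := (Complex.continuous_ofReal.tendsto 0).comp hr
      simpa [Function.comp_def] using this
    have t2 := integral_tendsto_zero hθ1 hθ2 lam1
    have t3 := integral_tendsto_zero hθ1 hθ2 lam2
    have := t1.add (t2.sub t3)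
    simpa using this
end

section
/- For x ∈ ℝ and y > 0, sup_{s ∈ ℝ} (1 + s²)/((s − x)² + y²) = (x²+y²+1)/(2y²) + √(((x²+y²+1)/(2y²))² − 1/y²), and this supremum is at most 1 + (1 + x²)/y². -/
set_option maxHeartbeats 1000000 in
theorem sup_poisson_kernel (x : ℝ) (y : ℝ) (hy : 0 < y) :
    (⨆ s : ℝ, (1 + s ^ 2) / ((s - x) ^ 2 + y ^ 2)) =
        (x ^ 2 + y ^ 2 + 1) / (2 * y ^ 2) +
          Real.sqrt (((x ^ 2 + y ^ 2 + 1) / (2 * y ^ 2)) ^ 2 - 1 / y ^ 2) ∧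
      (⨆ s : ℝ, (1 + s ^ 2) / ((s - x) ^ 2 + y ^ 2)) ≤ 1 + (1 + x ^ 2) / y ^ 2 := by
  have hy2 : (0:ℝ) < y ^ 2 := by positivity
  have hy0 : (y:ℝ) ≠ 0 := ne_of_gt hy
  -- nonnegativity under the sqrt
  have hA2y : 2*y ≤ x ^ 2 + y ^ 2 + 1 := by nlinarith [sq_nonneg (y - 1), sq_nonneg x]
  have hAsq : 4*y^2 ≤ (x ^ 2 + y ^ 2 + 1)^2 := by nlinarith [hA2y, hy, sq_nonneg x]
  have hD : (0:ℝ) ≤ ((x ^ 2 + y ^ 2 + 1) / (2 * y ^ 2)) ^ 2 - 1 / y ^ 2 := by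
    have h : 1 / y ^ 2 ≤ ((x ^ 2 + y ^ 2 + 1) / (2 * y ^ 2)) ^ 2 := by
      rw [div_pow, div_le_div_iff₀ (by positivity) (by positivity)]
      nlinarith [mul_le_mul_of_nonneg_right hAsq (le_of_lt hy2)]
    linarith
  obtain ⟨r, hrdef⟩ : ∃ r : ℝ, r = Real.sqrt (((x ^ 2 + y ^ 2 + 1) / (2 * y ^ 2)) ^ 2 - 1 / y ^ 2) :=
    ⟨_, rfl⟩
  have hrsq : r ^ 2 = ((x ^ 2 + y ^ 2 + 1) / (2 * y ^ 2)) ^ 2 - 1 / y ^ 2 := by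
    rw [hrdef]; exact Real.sq_sqrt hD
  have hrnn : 0 ≤ r := hrdef ▸ Real.sqrt_nonneg _
  obtain ⟨M, hMdef⟩ : ∃ M : ℝ, M = (x ^ 2 + y ^ 2 + 1) / (2 * y ^ 2) + r := ⟨_, rfl⟩
  rw [← hrdef, ← hMdef]
  -- cleared forms
  have hrsq' : (4*y^2*y^2*(r^2)) * y^2 = ((x^2+y^2+1)^2 - 4*y^2) * y^2 := by
    have h := hrsq
    field_simp at h
    linear_combination y^2 * h
  have hrsq2 : 4*y^2*y^2*(r^2) = (x^2+y^2+1)^2 - 4*y^2 :=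
    mul_right_cancel₀ (ne_of_gt hy2) hrsq'
  have hM' : 2*y^2*M = (x^2+y^2+1) + 2*y^2*r := by
    rw [hMdef]; field_simp
  -- the key quadratic identity, multiplied out
  have H1 : 4*y^2*y^2*M^2 - 4*y^2*(x^2+y^2+1)*M + 4*y^2 = 0 := by
    linear_combination (2*y^2*M - (x^2+y^2+1) + 2*y^2*r) * hM' + hrsq2
  have h2 : x^2+y^2+1 ≤ 2*y^2*M := by
    have h : 0 ≤ 2*y^2*r := by positivity
    linarith [hM']
  have h3 : 1 ≤ M := by
    by_contra hcon
    push_neg at hcon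
    have e1 : 0 ≤ y^2*((1 - M) * (2*y^2*M - (x^2+y^2+1))) :=
      mul_nonneg hy2.le (mul_nonneg (by linarith) (by linarith))
    have q : 0 < y^2*(y^2*((1-M)*(1-M))) :=
      mul_pos hy2 (mul_pos hy2 (mul_pos (by linarith) (by linarith)))
    nlinarith [e1, q, H1, sq_nonneg (x*y)]
  -- upper bound
  have hub : ∀ s : ℝ, (1 + s ^ 2) / ((s - x) ^ 2 + y ^ 2) ≤ M := by
    intro s
    rw [div_le_iff₀ (by positivity)]
    rcases eq_or_lt_of_le h3 with h4 | h4
    · -- M = 1 forces x = 0, y ≥ 1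
      have hx2 : y^2*x^2 = 0 := by rw [← h4] at H1; nlinarith [H1]
      have hx : x = 0 := by
        rcases mul_eq_zero.mp hx2 with h | h
        · exact absurd h (ne_of_gt hy2)
        · exact sq_eq_zero_iff.mp h
      rw [← h4] at h2 ⊢
      rw [hx]
      nlinarith [h2, sq_nonneg s]
    · nlinarith [sq_nonneg (y*((M - 1) * s - M * x)), H1, mul_pos (sub_pos.mpr h4) hy2]
  have hbdd : BddAbove (Set.range fun s : ℝ => (1 + s ^ 2) / ((s - x) ^ 2 + y ^ 2)) := by
    refine ⟨M, ?_⟩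
    rintro _ ⟨s, rfl⟩
    exact hub s
  -- lower bound
  have hlb : M ≤ ⨆ s : ℝ, (1 + s ^ 2) / ((s - x) ^ 2 + y ^ 2) := by
    rcases eq_or_lt_of_le h3 with h4 | h4
    · -- M = 1 : sup approaches 1 at infinity
      have hx2 : y^2*x^2 = 0 := by rw [← h4] at H1; nlinarith [H1]
      have hx : x = 0 := by
        rcases mul_eq_zero.mp hx2 with h | h
        · exact absurd h (ne_of_gt hy2)
        · exact sq_eq_zero_iff.mp h
      rw [← h4]
      by_contra hcon
      push_neg at hcon
      set c : ℝ := ⨆ s : ℝ, (1 + s ^ 2) / ((s - x) ^ 2 + y ^ 2) with hcdef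
      have hc0 : 0 < c := by
        have h := le_ciSup hbdd x
        have hfx : (0:ℝ) < (1 + x ^ 2) / ((x - x) ^ 2 + y ^ 2) := by positivity
        exact lt_of_lt_of_le hfx h
      obtain ⟨s0, hs0d⟩ : ∃ s0 : ℝ, s0 = (y ^ 2 + 2) / (1 - c) := ⟨_, rfl⟩
      have hc1 : (1:ℝ) - c ≠ 0 := ne_of_gt (by linarith)
      have hs0 : (1 - c) * s0 = y ^ 2 + 2 := by
        rw [hs0d]; field_simp
      have hs0pos : 0 < s0 := by nlinarith [hs0, hcon]
      have hs0big : y ^ 2 + 2 ≤ s0 := by nlinarith [hs0, hc0, hs0pos]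
      have hkey : (1 - c) * s0 * s0 = (y ^ 2 + 2) * s0 := by rw [hs0]
      have hgt : c < (1 + s0 ^ 2) / ((s0 - x) ^ 2 + y ^ 2) := by
        rw [lt_div_iff₀ (by positivity), hx]
        nlinarith [hkey, hs0big, hcon, hc0, hy2,
          mul_nonneg (by positivity : (0:ℝ) ≤ y^2+2) (by linarith : (0:ℝ) ≤ s0 - (y^2+2)),
          mul_pos hy2 (by linarith : (0:ℝ) < 1 - c)]
      exact absurd (le_ciSup hbdd s0) (not_le.mpr hgt)
    · -- M > 1 : attained at s0 = M x / (M-1)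
      have hM1 : M - 1 ≠ 0 := sub_ne_zero.mpr (ne_of_gt h4)
      obtain ⟨s0, hs0d⟩ : ∃ s0 : ℝ, s0 = M * x / (M - 1) := ⟨_, rfl⟩
      have e : s0 * (M - 1) - M * x = 0 := by rw [hs0d]; field_simp; ring
      have h5 : 4*y^2*((M - 1) * (M * ((s0 - x)^2 + y^2) - (1 + s0^2)))
          = (2*y*(s0 * (M - 1) - M * x))^2
            + (4*y^2*y^2*M^2 - 4*y^2*(x^2+y^2+1)*M + 4*y^2) := by ring
      rw [e, H1] at h5
      norm_num at h5
      have key : 1 + s0 ^ 2 = M * ((s0 - x) ^ 2 + y ^ 2) := by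
        rcases h5 with h | h | h
        · exact absurd h hy0
        · exact absurd h hM1
        · linarith
      have hfs : (1 + s0 ^ 2) / ((s0 - x) ^ 2 + y ^ 2) = M := by
        rw [key, mul_div_assoc, div_self (by positivity), mul_one]
      calc M = (1 + s0 ^ 2) / ((s0 - x) ^ 2 + y ^ 2) := hfs.symm
        _ ≤ _ := le_ciSup hbdd s0
  have heq : (⨆ s : ℝ, (1 + s ^ 2) / ((s - x) ^ 2 + y ^ 2)) = M :=
    le_antisymm (ciSup_le hub) hlb
  refine ⟨heq, ?_⟩
  rw [heq]
  -- M ≤ 1 + (1+x²)/y²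
  have hMA : y^2*M ≤ x^2+y^2+1 := by
    by_contra hc
    push_neg at hc
    have e2 : 0 < y^2*((y^2*M - (x^2+y^2+1))*M) :=
      mul_pos hy2 (mul_pos (by linarith) (by linarith))
    nlinarith [H1, e2, hy2]
  have h8 : M ≤ (x^2+y^2+1)/y^2 := by
    rw [le_div_iff₀ hy2]; linarith
  have h9 : (x^2+y^2+1)/y^2 = 1 + (1+x^2)/y^2 := by field_simp; ring
  linarith [h8, h9.symm.le, h9.le]
end

section
/- Let φ be holomorphic on ℂ₊, not a real constant, and suppose there is an open neighborhood U of ℝ ∪ {∞} in the Riemann sphere such that Im φ(z) ≥ 0 for all z ∈ U ∩ ℂ₊. Then Im φ(z) > 0 for all z ∈ ℂ₊, i.e., φ is an endofunction of ℂ₊. -/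
open Set Metric Complex

theorem boundary_positivity (φ : ℂ → ℂ)
    (hφ : DifferentiableOn ℂ φ {z : ℂ | 0 < z.im})
    (hnc : ¬∃ r : ℝ, ∀ z : ℂ, 0 < z.im → φ z = (r : ℂ))
    (hpos : ∃ ε > (0 : ℝ), ∃ R > (0 : ℝ), ∀ z : ℂ, 0 < z.im →
      (z.im < ε ∨ R < ‖z‖) → 0 ≤ (φ z).im) :
    ∀ z : ℂ, 0 < z.im → 0 < (φ z).im := by
  obtain ⟨ε, hε, R, hR, hb⟩ := hpos
  set U : Set ℂ := {z : ℂ | 0 < z.im} with hUdef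
  have hUopen : IsOpen U := isOpen_lt continuous_const Complex.continuous_im
  have hUconn : IsPreconnected U := (convex_halfSpace_im_gt 0).isPreconnected
  set g : ℂ → ℂ := fun z => Complex.exp (Complex.I * φ z) with hgdef
  have hgdiff : DifferentiableOn ℂ g U := ((differentiableOn_const _).mul hφ).cexp
  have habs : ∀ z, ‖g z‖ = Real.exp (-(φ z).im) := by
    intro z
    simp [hgdef, Complex.norm_exp, Complex.mul_re]
  -- Step 1: |g| ≤ 1 on U
  have hle : ∀ z ∈ U, ‖g z‖ ≤ 1 := by
    intro z hz
    by_cases hcase : z.im < ε ∨ R < ‖z‖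
    · rw [habs]
      exact Real.exp_le_one_iff.mpr (neg_nonpos.mpr (hb z hz hcase))
    · push_neg at hcase
      obtain ⟨hz1, hz2⟩ := hcase
      set V : Set ℂ := {w : ℂ | ε / 2 < w.im} ∩ Metric.ball 0 (R + 1) with hVdef
      have hVopen : IsOpen V :=
        (isOpen_lt continuous_const Complex.continuous_im).inter Metric.isOpen_ball
      have hVb : Bornology.IsBounded V := Metric.isBounded_ball.subset inter_subset_right
      have hclV : closure V ⊆ {w : ℂ | ε / 2 ≤ w.im} ∩ Metric.closedBall 0 (R + 1) := by
        apply closure_minimal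
        · exact inter_subset_inter (fun w (hw : ε / 2 < w.im) => le_of_lt hw) Metric.ball_subset_closedBall
        · exact (isClosed_le continuous_const Complex.continuous_im).inter
            Metric.isClosed_closedBall
      have hclU : closure V ⊆ U := fun w hw => lt_of_lt_of_le (half_pos hε) (hclV hw).1
      have hdc : DiffContOnCl ℂ g V := (hgdiff.mono hclU).diffContOnCl
      have hfr : ∀ w ∈ frontier V, ‖g w‖ ≤ 1 := by
        intro w hw
        have hwc : w ∈ closure V := frontier_subset_closure hw
        have hwU : (0 : ℝ) < w.im := hclU hwc
        have hwV : w ∉ V := by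
          rw [hVopen.frontier_eq] at hw
          exact hw.2
        have hcond : w.im < ε ∨ R < ‖w‖ := by
          by_contra h
          push_neg at h
          exact hwV ⟨by have := h.1; simp only [hVdef, mem_setOf_eq]; linarith,
            Metric.mem_ball.mpr (by
              simp only [dist_zero_right]
              linarith [h.2])⟩
        rw [habs]
        exact Real.exp_le_one_iff.mpr (neg_nonpos.mpr (hb w hwU hcond))
      have hzV : z ∈ V := ⟨by simp only [hVdef, mem_setOf_eq]; linarith,
        Metric.mem_ball.mpr (by
          simp only [dist_zero_right]; linarith)⟩
      have := Complex.norm_le_of_forall_mem_frontier_norm_le hVb hdc hfr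
        (subset_closure hzV)
      exact this
  -- Step 2: Im φ ≥ 0 on U
  have hge : ∀ z ∈ U, 0 ≤ (φ z).im := by
    intro z hz
    have := hle z hz
    rw [habs, Real.exp_le_one_iff] at this
    linarith
  -- Step 3: strict positivity
  intro z₀ hz₀
  by_contra hcontra
  push_neg at hcontra
  have him0 : (φ z₀).im = 0 := le_antisymm hcontra (hge z₀ hz₀)
  have habs1 : ‖g z₀‖ = 1 := by
    rw [habs, him0, neg_zero, Real.exp_zero]
  have hmax : IsMaxOn (norm ∘ g) U z₀ := by
    intro w hw
    simp only [Function.comp_apply, habs1]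
    exact hle w hw
  have heq := Complex.eqOn_of_isPreconnected_of_isMaxOn_norm hUconn hUopen hgdiff hz₀ hmax
  -- so Im φ = 0 on U
  have himall : ∀ z ∈ U, (φ z).im = 0 := by
    intro z hz
    have h1 : ‖g z‖ = 1 := by
      have := heq hz
      simp only [Function.const_apply] at this
      rw [this, habs1]
    rw [habs, Real.exp_eq_one_iff] at h1
    linarith
  -- open mapping theorem
  have hanal : AnalyticOnNhd ℂ φ U := hφ.analyticOnNhd hUopen
  rcases hanal.is_constant_or_isOpen hUconn with ⟨w, hw⟩ | hop
  · apply hnc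
    have hIU : (Complex.I : ℂ) ∈ U := by simp [hUdef]
    refine ⟨w.re, fun z hz => ?_⟩
    rw [hw z hz]
    have : w.im = 0 := by rw [← hw Complex.I hIU]; exact himall _ hIU
    exact Complex.ext (by simp) (by simp [this])
  · have hIU : (Complex.I : ℂ) ∈ U := by simp [hUdef]
    have hopen : IsOpen (φ '' U) := hop U Subset.rfl hUopen
    obtain ⟨δ, hδ, hball⟩ := Metric.isOpen_iff.mp hopen (φ Complex.I) ⟨_, hIU, rfl⟩
    have hmem : φ Complex.I + ((δ / 2 : ℝ) : ℂ) * Complex.I ∈ Metric.ball (φ Complex.I) δ := by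
      rw [Metric.mem_ball, dist_eq_norm]
      simp only [add_sub_cancel_left]
      rw [norm_mul, Complex.norm_I, mul_one, Complex.norm_real, Real.norm_eq_abs]
      rw [abs_of_pos (by linarith)]
      linarith
    obtain ⟨z, hz, hzeq⟩ := hball hmem
    have h1 : (φ z).im = 0 := himall z hz
    have h2 : (φ Complex.I + (δ / 2 : ℝ) * Complex.I).im = δ / 2 := by
      simp [himall _ hIU]
    rw [hzeq, h2] at h1
    linarith
end
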